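/- arXiv:1309.6007 — 5 statements merged into one kernel-verified Lean document; each statement's English description precedes it below -/
import Mathlib

section
/- Let V ∈ ℝ and t₀ ∈ ℝ, and let x, y, ψ, r, φ : ℝ → ℝ be functions such that: x has derivative V·cos(ψ(t₀)) at t₀, y has derivative V·sin(ψ(t₀)) at t₀, r and φ are differentiable at t₀, r(t₀) > 0, and x(t) = r(t)·cos(φ(t)) and y(t) = r(t)·sin(φ(t)) for all t in a neighborhood of t₀. Then φ'(t₀) = −(V/r(t₀))·sin(π − φ(t₀) + ψ(t₀)). Consequently, if in addition ψ has derivative u₀ at t₀, then the bearing angle function θ(t) = π − φ(t) + ψ(t) has derivative (V/r(t₀))·sin(θ(t₀)) + u₀ at t₀. -/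
/-- Transformation of the dynamics to polar coordinates: `φ̇ = -(V/r) sin θ`
and consequently `θ̇ = (V/r) sin θ + u` for the bearing angle `θ = π - φ + ψ`. -/
theorem bearing_angle_dynamics (V t₀ u₀ : ℝ) (x y ψ r φ : ℝ → ℝ)
    (hx : HasDerivAt x (V * Real.cos (ψ t₀)) t₀)
    (hy : HasDerivAt y (V * Real.sin (ψ t₀)) t₀)
    (hr : DifferentiableAt ℝ r t₀) (hφ : DifferentiableAt ℝ φ t₀)
    (hr0 : 0 < r t₀)
    (hxeq : ∀ᶠ t in nhds t₀, x t = r t * Real.cos (φ t))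
    (hyeq : ∀ᶠ t in nhds t₀, y t = r t * Real.sin (φ t)) :
    deriv φ t₀ = -(V / r t₀) * Real.sin (Real.pi - φ t₀ + ψ t₀) ∧
      (HasDerivAt ψ u₀ t₀ →
        HasDerivAt (fun t => Real.pi - φ t + ψ t)
          (V / r t₀ * Real.sin (Real.pi - φ t₀ + ψ t₀) + u₀) t₀) := by
  set r' := deriv r t₀ with hr'
  set p' := deriv φ t₀ with hp'
  have hrd := hr.hasDerivAt
  have hpd := hφ.hasDerivAt
  have h1 : HasDerivAt (fun t => r t * Real.cos (φ t))
      (r' * Real.cos (φ t₀) + r t₀ * (-Real.sin (φ t₀) * p')) t₀ := hrd.mul hpd.cos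
  have h2 : HasDerivAt (fun t => r t * Real.sin (φ t))
      (r' * Real.sin (φ t₀) + r t₀ * (Real.cos (φ t₀) * p')) t₀ := hrd.mul hpd.sin
  have hx' : HasDerivAt (fun t => r t * Real.cos (φ t)) (V * Real.cos (ψ t₀)) t₀ :=
    hx.congr_of_eventuallyEq (hxeq.mono fun t ht => ht.symm)
  have hy' : HasDerivAt (fun t => r t * Real.sin (φ t)) (V * Real.sin (ψ t₀)) t₀ :=
    hy.congr_of_eventuallyEq (hyeq.mono fun t ht => ht.symm)
  have e1 := h1.unique hx'
  have e2 := h2.unique hy'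
  have hpyth := Real.sin_sq_add_cos_sq (φ t₀)
  have hsin : Real.sin (Real.pi - φ t₀ + ψ t₀) = Real.sin (φ t₀ - ψ t₀) := by
    have : Real.pi - φ t₀ + ψ t₀ = Real.pi - (φ t₀ - ψ t₀) := by ring
    rw [this, Real.sin_pi_sub]
  have key : p' = -(V / r t₀) * Real.sin (Real.pi - φ t₀ + ψ t₀) := by
    rw [hsin, Real.sin_sub]
    have hrne : r t₀ ≠ 0 := ne_of_gt hr0
    field_simp
    linear_combination (-Real.sin (φ t₀)) * e1 + Real.cos (φ t₀) * e2 - p' * r t₀ * hpyth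
  refine ⟨key, fun hψd => ?_⟩
  have hθ : HasDerivAt (fun t => Real.pi - φ t + ψ t) (0 - p' + u₀) t₀ :=
    ((hasDerivAt_const t₀ Real.pi).sub hpd).add hψd
  convert hθ using 1
  rw [key]; ring
end

section
/- Let k > 0, r_a > 0 with k ≥ 1/r_a, and set r_s = √(r_a² − 1/k²). Then the equation 1/r = (k/r_s)·√(r_s² − r²) has a solution r ∈ (0, r_s) if and only if k·r_s ≥ 2, which holds if and only if k ≥ √5/r_a. In particular, for k ∈ (1/r_a, √5/r_a) no such solution exists. -/
set_option maxHeartbeats 1000000 in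
/-- With `r_s = √(r_a² - 1/k²)`, an inner stationary radius exists iff `k·r_s ≥ 2`,
which holds iff `k ≥ √5/r_a`; in particular for `k ∈ (1/r_a, √5/r_a)` none exists. -/
theorem inner_stationary_existence (k ra rs : ℝ) (hk : 0 < k) (hra : 0 < ra)
    (hk1 : 1 / ra ≤ k) (hrs : rs = Real.sqrt (ra ^ 2 - 1 / k ^ 2)) :
    ((∃ r ∈ Set.Ioo (0 : ℝ) rs, 1 / r = (k / rs) * Real.sqrt (rs ^ 2 - r ^ 2)) ↔
        2 ≤ k * rs) ∧
    (2 ≤ k * rs ↔ Real.sqrt 5 / ra ≤ k) ∧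
    (1 / ra < k → k < Real.sqrt 5 / ra →
      ¬ ∃ r ∈ Set.Ioo (0 : ℝ) rs, 1 / r = (k / rs) * Real.sqrt (rs ^ 2 - r ^ 2)) := by
  have hkra : 1 ≤ k * ra := by
    have := (div_le_iff₀ hra).mp hk1
    linarith
  have hA : 0 ≤ ra ^ 2 - 1 / k ^ 2 := by
    rw [sub_nonneg, div_le_iff₀ (by positivity)]
    nlinarith
  have hrs0 : 0 ≤ rs := hrs ▸ Real.sqrt_nonneg _
  have hrs_sq : rs ^ 2 = ra ^ 2 - 1 / k ^ 2 := by
    rw [hrs, Real.sq_sqrt hA]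
  have hkrs_sq : (k * rs) ^ 2 = k ^ 2 * ra ^ 2 - 1 := by
    rw [mul_pow, hrs_sq, mul_sub, mul_one_div_cancel (by positivity)]
  -- Part 1
  have part1 : (∃ r ∈ Set.Ioo (0 : ℝ) rs,
      1 / r = (k / rs) * Real.sqrt (rs ^ 2 - r ^ 2)) ↔ 2 ≤ k * rs := by
    constructor
    · rintro ⟨r, ⟨hr0, hrlt⟩, heq⟩
      have hrspos : 0 < rs := lt_trans hr0 hrlt
      have hw : 0 ≤ rs ^ 2 - r ^ 2 := by nlinarith
      have hw2 : (Real.sqrt (rs ^ 2 - r ^ 2)) ^ 2 = rs ^ 2 - r ^ 2 := Real.sq_sqrt hw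
      set w := Real.sqrt (rs ^ 2 - r ^ 2) with hwdef
      have hmain : rs = k * r * w := by
        field_simp at heq
        nlinarith [heq]
      have hprod : rs ^ 2 = k ^ 2 * r ^ 2 * (rs ^ 2 - r ^ 2) := by
        have h := congrArg (· ^ 2) hmain
        simp only [mul_pow] at h
        rw [hw2] at h
        exact h
      have h4 : 4 ≤ (k * rs) ^ 2 := by
        nlinarith [sq_nonneg (k * (rs ^ 2 - 2 * r ^ 2)), mul_pos hrspos hrspos]
      nlinarith [mul_nonneg hk.le hrs0]
    · intro hc
      set c := k * rs with hcdef
      have hrspos : 0 < rs := by nlinarith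
      have hc0 : 0 < c := by nlinarith
      have h4c : 4 / c ^ 2 ≤ 1 := by
        rw [div_le_one (by positivity)]; nlinarith
      set u := Real.sqrt (1 - 4 / c ^ 2) with hudef
      have hu0 : 0 ≤ u := Real.sqrt_nonneg _
      have hu2 : u ^ 2 = 1 - 4 / c ^ 2 := Real.sq_sqrt (by linarith)
      have hult : u < 1 := by
        nlinarith [div_pos (by norm_num : (0:ℝ) < 4) (by positivity : (0:ℝ) < c ^ 2)]
      set t := (1 - u) / 2 with htdef
      have ht0 : 0 < t := by simp only [htdef]; linarith
      have ht1 : t < 1 := by simp only [htdef]; linarith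
      have htprod : t * (1 - t) = 1 / c ^ 2 := by
        have : t * (1 - t) = (1 - u ^ 2) / 4 := by simp only [htdef]; ring
        rw [this, hu2]; ring
      set s := Real.sqrt t with hsdef
      have hs0 : 0 < s := Real.sqrt_pos.mpr ht0
      have hs2 : s ^ 2 = t := Real.sq_sqrt ht0.le
      have hs1 : s < 1 := by
        rw [hsdef, show (1:ℝ) = Real.sqrt 1 from (Real.sqrt_one).symm]
        exact Real.sqrt_lt_sqrt ht0.le ht1
      refine ⟨rs * s, ⟨by positivity, mul_lt_of_lt_one_right hrspos hs1⟩, ?_⟩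
      have hsub : rs ^ 2 - (rs * s) ^ 2 = rs ^ 2 * (1 - t) := by rw [mul_pow, hs2]; ring
      have hsqrt1 : Real.sqrt (rs ^ 2 - (rs * s) ^ 2) = rs * Real.sqrt (1 - t) := by
        rw [hsub, show rs ^ 2 * (1 - t) = (rs * Real.sqrt (1 - t)) ^ 2 by
          rw [mul_pow, Real.sq_sqrt (by linarith)],
          Real.sqrt_sq (by positivity)]
      rw [hsqrt1]
      have hst : Real.sqrt t * Real.sqrt (1 - t) = 1 / c := by
        rw [← Real.sqrt_mul ht0.le, htprod,
          show (1 : ℝ) / c ^ 2 = (1 / c) ^ 2 by ring, Real.sqrt_sq (by positivity)]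
      have hrhs : k / rs * (rs * Real.sqrt (1 - t)) = k * Real.sqrt (1 - t) := by
        field_simp
      rw [hrhs, div_eq_iff (by positivity : rs * s ≠ 0)]
      have hfin : k * Real.sqrt (1 - t) * (rs * s) = 1 := by
        rw [hsdef, show k * Real.sqrt (1 - t) * (rs * Real.sqrt t)
            = (k * rs) * (Real.sqrt t * Real.sqrt (1 - t)) from by ring, hst]
        field_simp
        exact hcdef.symm
      exact hfin.symm
  refine ⟨part1, ?_, ?_⟩
  · constructor
    · intro hc
      have h5 : 5 ≤ (k * ra) ^ 2 := by nlinarith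
      have : Real.sqrt 5 ≤ k * ra := by
        calc Real.sqrt 5 ≤ Real.sqrt ((k * ra) ^ 2) := Real.sqrt_le_sqrt h5
          _ = k * ra := Real.sqrt_sq (by positivity)
      rw [div_le_iff₀ hra]; linarith
    · intro h
      have h5 : Real.sqrt 5 ≤ k * ra := by
        rw [div_le_iff₀ hra] at h; linarith
      have h5sq : (5 : ℝ) ≤ (k * ra) ^ 2 := by
        nlinarith [Real.sq_sqrt (by norm_num : (5:ℝ) ≥ 0), Real.sqrt_nonneg 5]
      nlinarith [mul_nonneg hk.le hrs0]
  · intro _ hlt hex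
    have h2 := part1.mp hex
    have h5 : 5 ≤ (k * ra) ^ 2 := by nlinarith
    have : Real.sqrt 5 ≤ k * ra := by
      calc Real.sqrt 5 ≤ Real.sqrt ((k * ra) ^ 2) := Real.sqrt_le_sqrt h5
        _ = k * ra := Real.sqrt_sq (by positivity)
    rw [lt_div_iff₀ hra] at hlt; linarith
end

section
/- Let k, V, r_s, σ > 0, let u(r,θ) = kV·cos θ − (kV/r)·√(r² − r_s²) for r ≥ r_s and u(r,θ) = kV·cos θ + (kV/r_s)·√(r_s² − r²) for 0 < r < r_s, and let 𝒱(r,θ) = (k/V)·|r − r_s| + (θ/V)·sgn(r − r_s) + 2π/V. Then for every r > 0 with r ≠ r_s and every θ, 𝒱 is differentiable at (r,θ) with ∂𝒱/∂r = (k/V)·sgn(r − r_s), ∂𝒱/∂θ = sgn(r − r_s)/V and ∂²𝒱/∂θ² = 0, and the generator expression (−V·cos θ)·∂𝒱/∂r + ((V·sin θ)/r + u(r,θ))·∂𝒱/∂θ + (k²σ²/2)·∂²𝒱/∂θ² equals Λ(r,θ), where Λ(r,θ) = (sin θ)/r − (k/r)·√(r² − r_s²) for r > r_s and Λ(r,θ)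 = −(sin θ)/r − (k/r_s)·√(r_s² − r²) for 0 < r < r_s. -/
/-- Explicit computation of the generator of the noisy closed-loop diffusion applied
to the Lyapunov function `𝒱(r,θ) = (k/V)|r - r_s| + (θ/V)·sgn(r - r_s) + 2π/V`:
off `r = r_s` the function is differentiable with the indicated partial derivatives,
and `ℒ𝒱(r,θ) = Λ(r,θ)` with
`Λ(r,θ) = sinθ/r - (k/r)√(r² - r_s²)` for `r > r_s` and
`Λ(r,θ) = -sinθ/r - (k/r_s)√(r_s² - r²)` for `0 < r < r_s`. -/
theorem generator_of_lyapunov (k V rs σ : ℝ)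
    (hk : 0 < k) (hV : 0 < V) (hrs : 0 < rs) (hσ : 0 < σ)
    (u : ℝ → ℝ → ℝ)
    (hu_out : ∀ r θ, rs ≤ r →
      u r θ = k * V * Real.cos θ - (k * V / r) * Real.sqrt (r ^ 2 - rs ^ 2))
    (hu_in : ∀ r θ, 0 < r → r < rs →
      u r θ = k * V * Real.cos θ + (k * V / rs) * Real.sqrt (rs ^ 2 - r ^ 2))
    (W : ℝ → ℝ → ℝ)
    (hW : ∀ r θ, W r θ =
      (k / V) * |r - rs| + (θ / V) * Real.sign (r - rs) + 2 * Real.pi / V)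
    (Λ : ℝ → ℝ → ℝ)
    (hΛ_out : ∀ r θ, rs < r →
      Λ r θ = Real.sin θ / r - (k / r) * Real.sqrt (r ^ 2 - rs ^ 2))
    (hΛ_in : ∀ r θ, 0 < r → r < rs →
      Λ r θ = -(Real.sin θ / r) - (k / rs) * Real.sqrt (rs ^ 2 - r ^ 2)) :
    ∀ r θ : ℝ, 0 < r → r ≠ rs →
      DifferentiableAt ℝ (fun p : ℝ × ℝ => W p.1 p.2) (r, θ) ∧
      HasDerivAt (fun r' => W r' θ) ((k / V) * Real.sign (r - rs)) r ∧
      HasDerivAt (fun θ' => W r θ') (Real.sign (r - rs) / V) θ ∧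
      deriv (deriv (fun θ' => W r θ')) θ = 0 ∧
      (-V * Real.cos θ) * ((k / V) * Real.sign (r - rs)) +
          (V * Real.sin θ / r + u r θ) * (Real.sign (r - rs) / V) +
          (k ^ 2 * σ ^ 2 / 2) * deriv (deriv (fun θ' => W r θ')) θ
        = Λ r θ := by
  intro r θ hr hne
  rcases lt_or_gt_of_ne hne with hlt | hgt
  · -- r < rs
    have hs : Real.sign (r - rs) = -1 := Real.sign_of_neg (by linarith)
    -- 2D differentiability
    have hdiff : DifferentiableAt ℝ (fun p : ℝ × ℝ => W p.1 p.2) (r, θ) := by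
      have hg : DifferentiableAt ℝ
          (fun p : ℝ × ℝ => (k / V) * (rs - p.1) + (p.2 / V) * (-1) + 2 * Real.pi / V)
          (r, θ) := by fun_prop
      refine hg.congr_of_eventuallyEq ?_
      have hmem : {p : ℝ × ℝ | p.1 < rs} ∈ nhds (r, θ) :=
        (isOpen_lt continuous_fst continuous_const).mem_nhds hlt
      filter_upwards [hmem] with p hp
      rw [hW, abs_of_neg (by simpa using sub_neg.mpr hp),
        Real.sign_of_neg (sub_neg.mpr hp)]
      ring
    -- r-derivative
    have hdr : HasDerivAt (fun r' => W r' θ) ((k / V) * Real.sign (r - rs)) r := by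
      have h1 : HasDerivAt
          (fun r' => (k / V) * (rs - r') + (θ / V) * (-1) + 2 * Real.pi / V)
          ((k / V) * Real.sign (r - rs)) r := by
        rw [hs]
        have := (((hasDerivAt_id r).const_sub rs).const_mul (k / V)).add_const
          ((θ / V) * (-1) + 2 * Real.pi / V)
        convert this using 1
        · rfl
        · rfl
        funext x; simp only [id_eq]; ring
      refine h1.congr_of_eventuallyEq ?_
      filter_upwards [Iio_mem_nhds hlt] with r' hr'
      rw [hW, abs_of_neg (sub_neg.mpr hr'), Real.sign_of_neg (sub_neg.mpr hr')]
      ring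
    -- θ-slice is affine
    have hWθ : (fun θ' => W r θ') =
        fun θ' => θ' * (Real.sign (r - rs) / V) +
          ((k / V) * |r - rs| + 2 * Real.pi / V) := by
      funext θ'; rw [hW]; ring
    have hdθ : ∀ x : ℝ, HasDerivAt (fun θ' => W r θ') (Real.sign (r - rs) / V) x := by
      intro x
      rw [hWθ]
      simpa using ((hasDerivAt_id x).mul_const (Real.sign (r - rs) / V)).add_const
        ((k / V) * |r - rs| + 2 * Real.pi / V)
    have hderiv1 : deriv (fun θ' => W r θ') = fun _ => Real.sign (r - rs) / V :=
      funext fun x => (hdθ x).deriv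
    have hd2 : deriv (deriv (fun θ' => W r θ')) θ = 0 := by
      rw [hderiv1]; simp
    refine ⟨hdiff, hdr, hdθ θ, hd2, ?_⟩
    rw [hd2, hΛ_in r θ hr hlt, hu_in r θ hr hlt, hs]
    field_simp
    ring
  · -- rs < r
    have hs : Real.sign (r - rs) = 1 := Real.sign_of_pos (by linarith)
    have hdiff : DifferentiableAt ℝ (fun p : ℝ × ℝ => W p.1 p.2) (r, θ) := by
      have hg : DifferentiableAt ℝ
          (fun p : ℝ × ℝ => (k / V) * (p.1 - rs) + (p.2 / V) * 1 + 2 * Real.pi / V)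
          (r, θ) := by fun_prop
      refine hg.congr_of_eventuallyEq ?_
      have hmem : {p : ℝ × ℝ | rs < p.1} ∈ nhds (r, θ) :=
        (isOpen_lt continuous_const continuous_fst).mem_nhds hgt
      filter_upwards [hmem] with p hp
      rw [hW, abs_of_pos (sub_pos.mpr hp), Real.sign_of_pos (sub_pos.mpr hp)]
    have hdr : HasDerivAt (fun r' => W r' θ) ((k / V) * Real.sign (r - rs)) r := by
      have h1 : HasDerivAt
          (fun r' => (k / V) * (r' - rs) + (θ / V) * 1 + 2 * Real.pi / V)
          ((k / V) * Real.sign (r - rs)) r := by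
        rw [hs]
        have := (((hasDerivAt_id r).sub_const rs).const_mul (k / V)).add_const
          ((θ / V) * 1 + 2 * Real.pi / V)
        convert this using 1
        · rfl
        · rfl
        funext x; simp only [id_eq]; ring
      refine h1.congr_of_eventuallyEq ?_
      filter_upwards [Ioi_mem_nhds hgt] with r' hr'
      rw [hW, abs_of_pos (sub_pos.mpr hr'), Real.sign_of_pos (sub_pos.mpr hr')]
    have hWθ : (fun θ' => W r θ') =
        fun θ' => θ' * (Real.sign (r - rs) / V) +
          ((k / V) * |r - rs| + 2 * Real.pi / V) := by
      funext θ'; rw [hW]; ring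
    have hdθ : ∀ x : ℝ, HasDerivAt (fun θ' => W r θ') (Real.sign (r - rs) / V) x := by
      intro x
      rw [hWθ]
      simpa using ((hasDerivAt_id x).mul_const (Real.sign (r - rs) / V)).add_const
        ((k / V) * |r - rs| + 2 * Real.pi / V)
    have hderiv1 : deriv (fun θ' => W r θ') = fun _ => Real.sign (r - rs) / V :=
      funext fun x => (hdθ x).deriv
    have hd2 : deriv (deriv (fun θ' => W r θ')) θ = 0 := by
      rw [hderiv1]; simp
    refine ⟨hdiff, hdr, hdθ θ, hd2, ?_⟩
    rw [hd2, hΛ_out r θ hgt, hu_out r θ hgt.le, hs]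
    field_simp
    ring
end

section
/- Let k > 0, r_a > 0 with k ≥ 1/r_a, and set r_s = √(r_a² − 1/k²). Define Λ(r,θ) = (sin θ)/r − (k/r)·√(r² − r_s²) for r > r_s. Then Λ(r,θ) ≤ 0 for every r ≥ r_a and every θ ∈ ℝ. -/
/-- With `r_s = √(r_a² - 1/k²)`, the outer generator value
`Λ(r,θ) = sinθ/r - (k/r)√(r² - r_s²)` is nonpositive for every `r ≥ r_a`
regardless of the bearing `θ`. -/
theorem generator_nonpositive_beyond_orbit (k ra rs : ℝ)
    (hk : 0 < k) (hra : 0 < ra) (hk1 : 1 / ra ≤ k)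
    (hrs : rs = Real.sqrt (ra ^ 2 - 1 / k ^ 2))
    (Λ : ℝ → ℝ → ℝ)
    (hΛ_out : ∀ r θ, rs < r →
      Λ r θ = Real.sin θ / r - (k / r) * Real.sqrt (r ^ 2 - rs ^ 2)) :
    ∀ r θ : ℝ, ra ≤ r → Λ r θ ≤ 0 := by
  intro r θ hr
  have hkra : 1 ≤ k * ra := by
    rw [div_le_iff₀ hra] at hk1; linarith
  have hinv : 1 / k ^ 2 ≤ ra ^ 2 := by
    rw [div_le_iff₀ (by positivity)]
    nlinarith
  have hsub : 0 ≤ ra ^ 2 - 1 / k ^ 2 := by linarith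
  have hrs2 : rs ^ 2 = ra ^ 2 - 1 / k ^ 2 := by
    rw [hrs, Real.sq_sqrt hsub]
  have hrpos : 0 < r := lt_of_lt_of_le hra hr
  have hrs0 : 0 ≤ rs := hrs ▸ Real.sqrt_nonneg _
  have hk2 : 0 < 1 / k ^ 2 := by positivity
  have hrsr : rs < r := by nlinarith
  rw [hΛ_out r θ hrsr]
  have h1 : (1 : ℝ) / k ^ 2 ≤ r ^ 2 - rs ^ 2 := by nlinarith
  have hsq : 1 / k ≤ Real.sqrt (r ^ 2 - rs ^ 2) := by
    have := Real.sqrt_le_sqrt h1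
    rwa [show (1:ℝ)/k^2 = (1/k)^2 by ring, Real.sqrt_sq (by positivity)] at this
  have hks : 1 ≤ k * Real.sqrt (r ^ 2 - rs ^ 2) := by
    calc (1:ℝ) = k * (1/k) := by field_simp
    _ ≤ k * Real.sqrt (r ^ 2 - rs ^ 2) := by
        exact mul_le_mul_of_nonneg_left hsq hk.le
  have hsin : Real.sin θ ≤ k * Real.sqrt (r ^ 2 - rs ^ 2) :=
    le_trans (Real.sin_le_one θ) hks
  rw [sub_nonpos, div_mul_eq_mul_div]
  gcongr
end

section
/- Let k > 0, r_a > 0 with k ≥ 1/r_a, set r_s = √(r_a² − 1/k²), and let 0 < ε < k. Define r_{a,ε} = (ε + √(k²·r_a²·(k² − ε²) + ε²))/(k² − ε²), and Λ(r,θ) = (sin θ)/r − (k/r)·√(r² − r_s²) for r > r_s. Then: (i) for every r ≥ r_{a,ε} and every θ ∈ ℝ, Λ(r,θ) ≤ (1/r)·(1 − k·√(r² − r_s²)) ≤ −ε; (ii) r_{a,ε} > r_a; and (iii) r_{a,ε} → r_a as ε → 0⁺. -/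
/-- Beyond the explicit radius `r_{a,ε} = (ε + √(k²r_a²(k² - ε²) + ε²))/(k² - ε²)` the
generator value is at most `-ε` uniformly in `θ`; moreover `r_{a,ε} > r_a` and
`r_{a,ε} → r_a` as `ε → 0⁺`. -/
theorem generator_eps_bound_outer (k ra rs : ℝ)
    (hk : 0 < k) (hra : 0 < ra) (hk1 : 1 / ra ≤ k)
    (hrs : rs = Real.sqrt (ra ^ 2 - 1 / k ^ 2))
    (Λ : ℝ → ℝ → ℝ)
    (hΛ_out : ∀ r θ, rs < r →
      Λ r θ = Real.sin θ / r - (k / r) * Real.sqrt (r ^ 2 - rs ^ 2))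
    (raε : ℝ → ℝ)
    (hraε : ∀ ε, raε ε =
      (ε + Real.sqrt (k ^ 2 * ra ^ 2 * (k ^ 2 - ε ^ 2) + ε ^ 2)) / (k ^ 2 - ε ^ 2)) :
    (∀ ε : ℝ, 0 < ε → ε < k →
      (∀ r, raε ε ≤ r → ∀ θ : ℝ,
        Λ r θ ≤ (1 / r) * (1 - k * Real.sqrt (r ^ 2 - rs ^ 2)) ∧
        (1 / r) * (1 - k * Real.sqrt (r ^ 2 - rs ^ 2)) ≤ -ε) ∧
      ra < raε ε) ∧
    Filter.Tendsto raε (nhdsWithin 0 (Set.Ioi 0)) (nhds ra) := by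
  have hk2 : (0:ℝ) < k ^ 2 := by positivity
  have hkra : 1 ≤ k * ra := by
    have := (div_le_iff₀ hra).mp hk1
    linarith
  have harg : (0:ℝ) ≤ ra ^ 2 - 1 / k ^ 2 := by
    rw [sub_nonneg, div_le_iff₀ hk2]
    nlinarith
  have hrs2 : rs ^ 2 = ra ^ 2 - 1 / k ^ 2 := by
    rw [hrs, Real.sq_sqrt harg]
  have hrs0 : 0 ≤ rs := by rw [hrs]; exact Real.sqrt_nonneg _
  have hrsra : rs < ra := by
    nlinarith [hrs2, one_div_pos.mpr hk2]
  constructor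
  · intro ε hε hεk
    have hd : (0:ℝ) < k ^ 2 - ε ^ 2 := by nlinarith
    have hs2arg : (0:ℝ) ≤ k ^ 2 * ra ^ 2 * (k ^ 2 - ε ^ 2) + ε ^ 2 := by positivity
    have hs2 : Real.sqrt (k ^ 2 * ra ^ 2 * (k ^ 2 - ε ^ 2) + ε ^ 2) ^ 2
        = k ^ 2 * ra ^ 2 * (k ^ 2 - ε ^ 2) + ε ^ 2 := Real.sq_sqrt hs2arg
    have hs0 : 0 ≤ Real.sqrt (k ^ 2 * ra ^ 2 * (k ^ 2 - ε ^ 2) + ε ^ 2) :=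
      Real.sqrt_nonneg _
    have hra_lt : ra < raε ε := by
      rw [hraε, lt_div_iff₀ hd]
      have hsgt : ra * (k ^ 2 - ε ^ 2)
          < Real.sqrt (k ^ 2 * ra ^ 2 * (k ^ 2 - ε ^ 2) + ε ^ 2) :=
        (Real.lt_sqrt (by positivity)).mpr (by nlinarith [mul_nonneg (mul_nonneg (sq_nonneg ra) (sq_nonneg ε)) hd.le, sq_nonneg ε])
      linarith
    refine ⟨?_, hra_lt⟩
    intro r hr θ
    have hrra : ra < r := lt_of_lt_of_le hra_lt hr
    have hr0 : 0 < r := lt_trans hra hrra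
    have hrsr : rs < r := lt_trans hrsra hrra
    have hsqarg : (0:ℝ) ≤ r ^ 2 - rs ^ 2 := by nlinarith
    have hkey : (k ^ 2 - ε ^ 2) * r ^ 2 - 2 * ε * r - k ^ 2 * ra ^ 2 ≥ 0 := by
      have h1 : (k ^ 2 - ε ^ 2) * r
          ≥ ε + Real.sqrt (k ^ 2 * ra ^ 2 * (k ^ 2 - ε ^ 2) + ε ^ 2) := by
        have := (div_le_iff₀ hd).mp ((hraε ε ▸ hr))
        linarith
      nlinarith [hs2, hs0]
    have hsq : (1 + ε * r) ^ 2 ≤ k ^ 2 * (r ^ 2 - rs ^ 2) := by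
      have hrsk : k ^ 2 * rs ^ 2 = k ^ 2 * ra ^ 2 - 1 := by
        rw [hrs2]; field_simp
      nlinarith [hkey, hrsk]
    have hksqrt : 1 + ε * r ≤ k * Real.sqrt (r ^ 2 - rs ^ 2) := by
      have heq : k * Real.sqrt (r ^ 2 - rs ^ 2)
          = Real.sqrt (k ^ 2 * (r ^ 2 - rs ^ 2)) := by
        rw [Real.sqrt_mul (by positivity), Real.sqrt_sq hk.le]
      rw [heq, show (1 + ε * r) = Real.sqrt ((1 + ε * r) ^ 2) from
        (Real.sqrt_sq (by positivity)).symm]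
      exact Real.sqrt_le_sqrt hsq
    constructor
    · rw [hΛ_out r θ hrsr]
      have hsin : Real.sin θ / r ≤ 1 / r := by
        gcongr
        exact Real.sin_le_one θ
      have hrewrite : (1 / r) * (1 - k * Real.sqrt (r ^ 2 - rs ^ 2))
          = 1 / r - (k / r) * Real.sqrt (r ^ 2 - rs ^ 2) := by ring
      rw [hrewrite]
      linarith
    · have h2 : 1 - k * Real.sqrt (r ^ 2 - rs ^ 2) ≤ -ε * r := by linarith
      calc (1 / r) * (1 - k * Real.sqrt (r ^ 2 - rs ^ 2))
          ≤ (1 / r) * (-ε * r) := by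
            apply mul_le_mul_of_nonneg_left h2 (by positivity)
        _ = -ε := by field_simp
  · have heq : raε = fun ε => (ε + Real.sqrt (k ^ 2 * ra ^ 2 * (k ^ 2 - ε ^ 2) + ε ^ 2))
        / (k ^ 2 - ε ^ 2) := funext hraε
    rw [heq]
    have c1 : Continuous fun ε : ℝ => k ^ 2 * ra ^ 2 * (k ^ 2 - ε ^ 2) + ε ^ 2 :=
      (continuous_const.mul (continuous_const.sub (continuous_pow 2))).add
        (continuous_pow 2)
    have c2 : Continuous fun ε : ℝ => k ^ 2 - ε ^ 2 :=
      continuous_const.sub (continuous_pow 2)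
    have hc : ContinuousAt
        (fun ε : ℝ => (ε + Real.sqrt (k ^ 2 * ra ^ 2 * (k ^ 2 - ε ^ 2) + ε ^ 2))
          / (k ^ 2 - ε ^ 2)) 0 := by
      apply ContinuousAt.div
      · exact (continuous_id.add (Real.continuous_sqrt.comp c1)).continuousAt
      · exact c2.continuousAt
      · simpa using hk2.ne'
    have hval : ((0:ℝ) + Real.sqrt (k ^ 2 * ra ^ 2 * (k ^ 2 - (0:ℝ) ^ 2) + (0:ℝ) ^ 2))
        / (k ^ 2 - (0:ℝ) ^ 2) = ra := by
      have h1 : k ^ 2 * ra ^ 2 * (k ^ 2 - (0:ℝ) ^ 2) + (0:ℝ) ^ 2 = (k ^ 2 * ra) ^ 2 := by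
        ring
      rw [h1, Real.sqrt_sq (by positivity)]
      field_simp
      ring
    have := hc.tendsto
    rw [hval] at this
    exact this.mono_left nhdsWithin_le_nhds
end
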